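/- Let M be a [0,1]-module with a countable dual basis (e_i, φ_i)_{i∈I} such that e_i ≠ 0 and φ_i ≠ 0 for every i ∈ I. Define a relation ≈ on I by i ≈ j iff φ_j(e_i) ≠ 0. Then ≈ is an equivalence relation on I. -/

import Mathlib

/-- A Σ-monoid: a set with a partial countable sum, represented via `Option`. -/
structure SigmaMonoid (M : Type) where
  zero : M
  sum : (ℕ → M) → Option M
  sum_unit : ∀ (x : ℕ → M) (j : ℕ), (∀ i, i ≠ j → x i = zero) → sum x = some (x j)
  sum_perm : ∀ (I J : Set ℕ) (σ : ↥(Iᶜ) ≃ ↥(Jᶜ)) (x y : ℕ → M),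
      (∀ i ∈ I, x i = zero) → (∀ j ∈ J, y j = zero) →
      (∀ i : ↥(Iᶜ), x i.1 = y (σ i).1) → sum x = sum y
  sum_assoc : ∀ (σ : ℕ × ℕ ≃ ℕ) (x s : ℕ → M),
      (∀ j, sum (fun k => x (σ (j, k))) = some (s j)) → sum x = sum s
  sum_assoc_inner : ∀ (σ : ℕ × ℕ ≃ ℕ) (x : ℕ → M) (v : M),
      sum x = some v → ∀ j, ∃ w, sum (fun k => x (σ (j, k))) = some w

/-- The (partial) binary sum `x + y`, i.e. the sum of the family `(x, y, 0, 0, …)`. -/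
def SigmaMonoid.add {M : Type} (S : SigmaMonoid M) (x y : M) : Option M :=
  S.sum (fun n => if n = 0 then x else if n = 1 then y else S.zero)

/-- A Σ-monoid homomorphism. -/
def SigmaHom {M N : Type} (S : SigmaMonoid M) (T : SigmaMonoid N) (f : M → N) : Prop :=
  f S.zero = T.zero ∧
  ∀ (x : ℕ → M) (v : M), S.sum x = some v → T.sum (fun i => f (x i)) = some (f v)

/-- A Σ-semiring: a Σ-monoid with a total commutative multiplication distributing
over the partial sums. -/
structure SigmaSemiring (R : Type) extends SigmaMonoid R where
  one : R
  mul : R → R → R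
  mul_assoc' : ∀ a b c, mul (mul a b) c = mul a (mul b c)
  mul_comm' : ∀ a b, mul a b = mul b a
  one_mul' : ∀ a, mul one a = a
  zero_mul' : ∀ a, mul zero a = zero
  mul_sum : ∀ (e : ℕ ≃ ℕ × ℕ) (r s : ℕ → R) (a b : R),
      sum r = some a → sum s = some b →
      sum (fun n => mul (r (e n).1) (s (e n).2)) = some (mul a b)

/-- A module over a Σ-semiring. -/
structure SigmaModule (R : Type) (S : SigmaSemiring R) (M : Type) extends SigmaMonoid M where
  smul : R → M → M
  one_smul' : ∀ x, smul S.one x = x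
  mul_smul' : ∀ r s x, smul (S.mul r s) x = smul r (smul s x)
  zero_smul' : ∀ x, smul S.zero x = zero
  smul_zero' : ∀ r, smul r zero = zero
  smul_sum : ∀ (e : ℕ ≃ ℕ × ℕ) (r : ℕ → R) (x : ℕ → M) (a : R) (b : M),
      S.sum r = some a → sum x = some b →
      sum (fun n => smul (r (e n).1) (x (e n).2)) = some (smul a b)

/-- An `R`-linear map between `R`-modules. -/
def RLinear {R M N : Type} (S : SigmaSemiring R)
    (MM : SigmaModule R S M) (NN : SigmaModule R S N) (f : M → N) : Prop :=
  f MM.zero = NN.zero ∧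
  (∀ (x : ℕ → M) (v : M), MM.sum x = some v → NN.sum (fun i => f (x i)) = some (f v)) ∧
  (∀ r x, f (MM.smul r x) = NN.smul r (f x))

/-- The unit interval `[0,1]`, as a subtype of the nonnegative reals. -/
def UnitI : Type := {r : NNReal // r ≤ 1}

def uZero : UnitI := ⟨0, zero_le_one⟩

def uOne : UnitI := ⟨1, le_refl 1⟩

def uMul (a b : UnitI) : UnitI :=
  ⟨a.1 * b.1, by
    calc a.1 * b.1 ≤ 1 * 1 := mul_le_mul' a.2 b.2
    _ = 1 := one_mul 1⟩

open Classical in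
/-- The partial sum on `[0,1]`: `Σ_i r_i` is defined iff the series converges
to a value `≤ 1`, in which case that value is the sum. -/
noncomputable def uSum (r : ℕ → UnitI) : Option UnitI :=
  if h : (∑' i, ((r i).1 : ENNReal)) ≤ 1 then
    some ⟨(∑' i, ((r i).1 : ENNReal)).toNNReal, by
      have hne : (∑' i, ((r i).1 : ENNReal)) ≠ ⊤ :=
        ne_top_of_le_ne_top ENNReal.one_ne_top h
      exact ENNReal.coe_le_coe.mp
        (by rw [ENNReal.coe_toNNReal hne]; exact_mod_cast h)⟩
  else none

open Classical in
/-- `sumIdx S f v` says that the sum of the countable family `f`, taken along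
an enumeration of its index set padded with zeros (which is independent of the
enumeration by the permutation axiom), is defined and equals `v`. -/
def sumIdx {M : Type} (S : SigmaMonoid M) {ι : Type} (f : ι → M) (v : M) : Prop :=
  ∃ e : ι ↪ ℕ,
    S.sum (fun n => if h : ∃ i, e i = n then f h.choose else S.zero) = some v

/-- A `[0,1]`-linear map from a `[0,1]`-module to `[0,1]` itself. -/
def UnitLinearMap (U : SigmaSemiring UnitI) {M : Type}
    (MM : SigmaModule UnitI U M) (φ : M → UnitI) : Prop :=
  φ MM.zero = U.zero ∧
  (∀ (x : ℕ → M) (v : M), MM.sum x = some v →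
    U.sum (fun i => φ (x i)) = some (φ v)) ∧
  (∀ (r : UnitI) (x : M), φ (MM.smul r x) = U.mul r (φ x))

/-- A countable dual basis `(e_i, φ_i)_{i ∈ ι}` of a `[0,1]`-module:
each `φ_i` is `[0,1]`-linear and `x = Σ_{i∈ι} φ_i(x)·e_i` for every `x`. -/
def IsDualBasis (U : SigmaSemiring UnitI) {M ι : Type}
    (MM : SigmaModule UnitI U M) (e : ι → M) (φ : ι → M → UnitI) : Prop :=
  (∀ i, UnitLinearMap U MM (φ i)) ∧
  ∀ x : M, sumIdx MM.toSigmaMonoid (fun i => MM.smul (φ i x) (e i)) x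


open scoped ENNReal NNReal

private lemma refl_aux {I : Type} (A : I → I → ℝ≥0∞)
    (hidem : ∀ x y, ∑' k, A x k * A k y = A x y)
    {i : I} (hii : A i i = 0) (n : ℕ) (x y : I) :
    (n : ℝ≥0∞) * (A x i * A i y) ≤ A x y := by
  classical
  induction n generalizing x y with
  | zero => simp
  | succ n ih =>
    have key : ∑' l, (if l = i then 0 else A x l * A l i) = A x i := by
      have h := ENNReal.tsum_eq_add_tsum_ite (f := fun l => A x l * A l i) i
      rw [hidem x i, hii, mul_zero, zero_add] at h
      exact h.symm
    have expand : A x i * A i y + ∑' l, (if l = i then 0 else A x l * A l y) = A x y := by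
      have h := ENNReal.tsum_eq_add_tsum_ite (f := fun l => A x l * A l y) i
      rw [hidem x y] at h
      exact h.symm
    have step : ∑' l, (if l = i then 0 else ((n:ℝ≥0∞) * A i y) * (A x l * A l i))
        ≤ ∑' l, (if l = i then 0 else A x l * A l y) := by
      refine ENNReal.tsum_le_tsum fun l => ?_
      by_cases hl : l = i
      · simp [hl]
      · simp only [if_neg hl]
        calc ((n:ℝ≥0∞) * A i y) * (A x l * A l i)
            = A x l * ((n:ℝ≥0∞) * (A l i * A i y)) := by ring
          _ ≤ A x l * A l y := mul_le_mul_right (ih l y) _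
    have lhs_eq : ∑' l, (if l = i then 0 else ((n:ℝ≥0∞) * A i y) * (A x l * A l i))
        = (n:ℝ≥0∞) * A i y * A x i := by
      rw [← key, ← ENNReal.tsum_mul_left]
      refine tsum_congr fun l => ?_
      by_cases hl : l = i <;> simp [hl]
    have hcast : ((n.succ : ℕ) : ℝ≥0∞) * (A x i * A i y)
        = A x i * A i y + (n:ℝ≥0∞) * A i y * A x i := by
      rw [Nat.cast_succ]; ring
    rw [hcast, ← expand]
    exact add_le_add_right (by rw [← lhs_eq]; exact step) _

private lemma diag_aux {I : Type} (A : I → I → ℝ≥0∞) (hle : ∀ x y, A x y ≤ 1)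
    (hidem : ∀ x y, ∑' k, A x k * A k y = A x y)
    {i : I} (hrow : ∃ m, A i m ≠ 0) (hcol : ∃ h, A h i ≠ 0) : A i i ≠ 0 := by
  intro hii
  obtain ⟨m, hm⟩ := hrow
  obtain ⟨h, hh⟩ := hcol
  set d : ℝ≥0∞ := A h i * A i m with hd
  have hd0 : d ≠ 0 := mul_ne_zero hh hm
  have hdle : d ≤ 1 := by
    calc d ≤ 1 * 1 := mul_le_mul' (hle h i) (hle i m)
      _ = 1 := one_mul 1
  have hdtop : d ≠ ⊤ := (hdle.trans_lt ENNReal.one_lt_top).ne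
  have hdiv : (1 : ℝ≥0∞) / d ≠ ⊤ := (ENNReal.div_lt_top ENNReal.one_ne_top hd0).ne
  obtain ⟨n, hn⟩ := ENNReal.exists_nat_gt hdiv
  have h1 : (1:ℝ≥0∞) < (n:ℝ≥0∞) * d :=
    (ENNReal.div_lt_iff (Or.inl hd0) (Or.inl hdtop)).mp hn
  have h2 : (n:ℝ≥0∞) * d ≤ A h m := refl_aux A hidem hii n h m
  exact absurd (h1.trans_le (h2.trans (hle h m))) (lt_irrefl 1)

private lemma symm_aux {I : Type} (A : I → I → ℝ≥0∞) (hle : ∀ x y, A x y ≤ 1)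
    (hidem : ∀ x y, ∑' k, A x k * A k y = A x y)
    {i j : I} (hij : A i j ≠ 0) (hii : A i i ≠ 0) (hjj : A j j ≠ 0) :
    A j i ≠ 0 := by
  classical
  intro hji
  set B : Set I := {m | A m j ≠ 0 ∧ A m i ≠ 0} with hB
  have hiB : i ∈ B := ⟨hij, hii⟩
  have hjB : j ∉ B := fun hc => hc.2 hji
  set S : ℝ≥0∞ := ∑' l : B, A i l.1 * A l.1 j with hS
  have hSpos : S ≠ 0 := by
    intro h0
    have hle' := ENNReal.le_tsum (f := fun l : B => A i l.1 * A l.1 j) ⟨i, hiB⟩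
    rw [← hS, h0, le_zero_iff] at hle'
    exact mul_ne_zero hii hij hle'
  have hSle : S ≤ A i j := by
    rw [← hidem i j]
    exact ENNReal.tsum_comp_le_tsum_of_injective Subtype.val_injective _
  have hStop : S ≠ ⊤ := ((hSle.trans (hle i j)).trans_lt ENNReal.one_lt_top).ne
  have key : S = ∑' m : B, A i m.1 * (∑' l : B, A m.1 l.1 * A l.1 j) := by
    calc S = ∑' l : B, (∑' m : I, A i m * A m l.1) * A l.1 j :=
          tsum_congr fun l => by rw [hidem]
      _ = ∑' l : B, ∑' m : I, A i m * A m l.1 * A l.1 j :=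
          tsum_congr fun l => (ENNReal.tsum_mul_right).symm
      _ = ∑' m : I, ∑' l : B, A i m * A m l.1 * A l.1 j := ENNReal.tsum_comm
      _ = ∑' m : I, A i m * (∑' l : B, A m l.1 * A l.1 j) := by
          refine tsum_congr fun m => ?_
          rw [← ENNReal.tsum_mul_left]
          exact tsum_congr fun l => by ring
      _ = ∑' m : B, A i m.1 * (∑' l : B, A m.1 l.1 * A l.1 j) := by
          refine (tsum_subtype_eq_of_support_subset ?_).symm
          intro m hm
          rcases mul_ne_zero_iff.mp hm with ⟨-, hinner⟩
          have : ∃ l : B, A m l.1 * A l.1 j ≠ 0 := by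
            by_contra hall
            push_neg at hall
            exact hinner (ENNReal.tsum_eq_zero.mpr fun l => hall l)
          obtain ⟨l, hl⟩ := this
          rcases mul_ne_zero_iff.mp hl with ⟨hml, hlj⟩
          constructor
          · intro h0
            have := ENNReal.le_tsum (f := fun k => A m k * A k j) l.1
            rw [hidem, h0, le_zero_iff] at this
            exact hl this
          · intro h0
            have := ENNReal.le_tsum (f := fun k => A m k * A k i) l.1
            rw [hidem, h0, le_zero_iff] at this
            exact mul_ne_zero hml l.2.2 this
  have inner_le : ∀ m : B, (∑' l : B, A m.1 l.1 * A l.1 j) + A m.1 j * A j j ≤ A m.1 j := by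
    intro m
    have h1 : ∑' l : B, A m.1 l.1 * A l.1 j
        = ∑' l : B, (if l.1 = j then 0 else A m.1 l.1 * A l.1 j) :=
      tsum_congr fun l => by rw [if_neg (show ¬(l.1 = j) from fun hc => hjB (hc ▸ l.2))]
    have h2 : ∑' l : B, (if l.1 = j then 0 else A m.1 l.1 * A l.1 j)
        ≤ ∑' l : I, (if l = j then 0 else A m.1 l * A l j) :=
      ENNReal.tsum_comp_le_tsum_of_injective Subtype.val_injective _
    have h3 : A m.1 j * A j j + ∑' l : I, (if l = j then 0 else A m.1 l * A l j)
        = A m.1 j := by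
      have h := ENNReal.tsum_eq_add_tsum_ite (f := fun l => A m.1 l * A l j) j
      rw [hidem m.1 j] at h
      exact h.symm
    calc (∑' l : B, A m.1 l.1 * A l.1 j) + A m.1 j * A j j
        ≤ (∑' l : I, (if l = j then 0 else A m.1 l * A l j)) + A m.1 j * A j j := by
          exact add_le_add_left (h1 ▸ h2) _
      _ = A m.1 j := by rw [add_comm]; exact h3
  have grow : S + A j j * S ≤ S := by
    calc S + A j j * S
        = (∑' m : B, A i m.1 * (∑' l : B, A m.1 l.1 * A l.1 j))
            + ∑' m : B, A j j * (A i m.1 * A m.1 j) := by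
          rw [← key, ENNReal.tsum_mul_left, hS]
      _ = ∑' m : B, (A i m.1 * (∑' l : B, A m.1 l.1 * A l.1 j)
            + A i m.1 * (A m.1 j * A j j)) := by
          rw [ENNReal.tsum_add]
          congr 1
          exact tsum_congr fun m => by ring
      _ ≤ ∑' m : B, A i m.1 * A m.1 j := by
          refine ENNReal.tsum_le_tsum fun m => ?_
          rw [← mul_add]
          exact mul_le_mul_right (inner_le m) _
      _ = S := rfl
  have : S < S + A j j * S := ENNReal.lt_add_right hStop (mul_ne_zero hjj hSpos)
  exact absurd (this.trans_le grow) (lt_irrefl S)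

/-- In a `[0,1]`-module with a countable dual basis (with nonzero basis vectors
and nonzero coordinate functionals), the relation `i ≈ j iff φ_j(e_i) ≠ 0` is
an equivalence relation on the index set. -/
theorem stmt16 (U : SigmaSemiring UnitI)
    (hUzero : U.zero = uZero) (hUone : U.one = uOne)
    (hUsum : U.sum = uSum) (hUmul : U.mul = uMul)
    {M ι : Type} [Countable ι]
    (MM : SigmaModule UnitI U M)
    (e : ι → M) (φ : ι → M → UnitI)
    (hbasis : IsDualBasis U MM e φ)
    (he0 : ∀ i, e i ≠ MM.zero)
    (hφ0 : ∀ i, φ i ≠ fun _ => U.zero) :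
    Equivalence (fun i j : ι => φ j (e i) ≠ U.zero) := by
  classical
  obtain ⟨hlin, hexp⟩ := hbasis
  set F : UnitI → ℝ≥0∞ := fun r => ((r.1 : ℝ≥0) : ℝ≥0∞) with hFdef
  have hF0 : ∀ z : UnitI, F z = 0 ↔ z = U.zero := by
    intro z
    rw [hUzero]
    constructor
    · intro h
      have h' : ((z.1 : ℝ≥0) : ℝ≥0∞) = 0 := h
      exact Subtype.ext (show z.1 = (0:ℝ≥0) from by exact_mod_cast h')
    · intro h
      rw [h]
      simp [hFdef, uZero]
  have hFle : ∀ z : UnitI, F z ≤ 1 := fun z => by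
    simp only [hFdef]
    exact_mod_cast z.2
  have hFmul : ∀ a b : UnitI, F (uMul a b) = F a * F b := fun a b => by
    simp [hFdef, uMul, ENNReal.coe_mul]
  have hUS : ∀ (f : ℕ → UnitI) (v : UnitI), uSum f = some v → ∑' n, F (f n) = F v := by
    intro f v h
    unfold uSum at h
    split at h
    case isTrue hc =>
      replace h := Option.some.inj h
      have hv : (v.1 : ℝ≥0∞) = ∑' n, ((f n).1 : ℝ≥0∞) := by
        rw [← h]
        exact ENNReal.coe_toNNReal (ne_top_of_le_ne_top ENNReal.one_ne_top hc)
      simp only [hFdef]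
      exact hv.symm
    case isFalse => exact absurd h (by simp)
  have main : ∀ (x : M) (j : ι), F (φ j x) = ∑' i : ι, F (φ i x) * F (φ j (e i)) := by
    intro x j
    obtain ⟨emb, hsum⟩ := hexp x
    have h1 := (hlin j).2.1 _ _ hsum
    rw [hUsum] at h1
    have h2 := hUS _ _ h1
    rw [← h2]
    have h3 : ∀ n : ℕ,
        F (φ j (if h : ∃ i, emb i = n then MM.smul (φ h.choose x) (e h.choose)
          else MM.toSigmaMonoid.zero))
        = Function.extend emb (fun i => F (φ i x) * F (φ j (e i))) 0 n := by
      intro n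
      rw [Function.extend_def]
      by_cases h : ∃ i, emb i = n
      · rw [dif_pos h, dif_pos h]
        rw [(hlin j).2.2, hUmul, hFmul]
      · rw [dif_neg h, dif_neg h]
        rw [(hlin j).1]
        exact (hF0 U.zero).mpr rfl
    calc ∑' n, F (φ j (if h : ∃ i, emb i = n then MM.smul (φ h.choose x) (e h.choose)
          else MM.toSigmaMonoid.zero))
        = ∑' n, Function.extend emb (fun i => F (φ i x) * F (φ j (e i))) 0 n :=
          tsum_congr h3
      _ = ∑' i : ι, F (φ i x) * F (φ j (e i)) := tsum_extend_zero emb.injective _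
  set A : ι → ι → ℝ≥0∞ := fun i j => F (φ j (e i)) with hA
  have hidem : ∀ x y, ∑' k, A x k * A k y = A x y := fun x y => (main (e x) y).symm
  have hle : ∀ x y, A x y ≤ 1 := fun x y => hFle _
  have hrow : ∀ i, ∃ m, A i m ≠ 0 := by
    intro i
    by_contra hall
    push_neg at hall
    have hz : ∀ m, φ m (e i) = U.zero := fun m => (hF0 _).mp (hall m)
    obtain ⟨emb, hsum⟩ := hexp (e i)
    have hfz : (fun n => if h : ∃ k, emb k = n then MM.smul (φ h.choose (e i)) (e h.choose)
        else MM.toSigmaMonoid.zero) = fun _ => MM.toSigmaMonoid.zero := by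
      funext n
      by_cases h : ∃ k, emb k = n
      · rw [dif_pos h, hz h.choose, MM.zero_smul']
      · rw [dif_neg h]
    rw [hfz] at hsum
    have hzsum := MM.toSigmaMonoid.sum_unit (fun _ => MM.toSigmaMonoid.zero) 0
      (fun _ _ => rfl)
    rw [hzsum, Option.some.injEq] at hsum
    exact he0 i hsum.symm
  have hcol : ∀ j, ∃ i, A i j ≠ 0 := by
    intro j
    obtain ⟨x, hx⟩ := Function.ne_iff.mp (hφ0 j)
    by_contra hall
    push_neg at hall
    have : F (φ j x) = 0 := by
      rw [main x j]
      refine ENNReal.tsum_eq_zero.mpr fun i => ?_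
      exact mul_eq_zero_of_right _ (hall i)
    exact hx ((hF0 _).mp this)
  have hrel : ∀ i j, (φ j (e i) ≠ U.zero) ↔ A i j ≠ 0 := by
    intro i j
    constructor
    · intro h hc
      exact h ((hF0 _).mp hc)
    · intro h hc
      exact h ((hF0 _).mpr hc)
  have hdiag : ∀ i, A i i ≠ 0 := fun i => diag_aux A hle hidem (hrow i) (hcol i)
  constructor
  · intro i
    exact (hrel i i).mpr (hdiag i)
  · intro i j h
    exact (hrel j i).mpr (symm_aux A hle hidem ((hrel i j).mp h) (hdiag i) (hdiag j))
  · intro i j k hij hjk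
    refine (hrel i k).mpr ?_
    intro h0
    have h1 := ENNReal.le_tsum (f := fun l => A i l * A l k) j
    rw [hidem, h0, le_zero_iff] at h1
    exact mul_ne_zero ((hrel i j).mp hij) ((hrel j k).mp hjk) h1
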